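/- Let H be a self-adjoint operator on ℂ^d with spectral decomposition H = Σ_j h_j |j⟩⟨j|, and let ρ be a density operator on ℂ^d with Tr(ρH) = N. Then there exist unit vectors ψ_k ∈ ℂ^d and weights p_k > 0 with Σ_k p_k = 1 such that ρ = Σ_k p_k |ψ_k⟩⟨ψ_k| and ⟨ψ_k| H |ψ_k⟩ = N for every k. -/

import Mathlib

open Matrix Finset
open scoped ComplexOrder

namespace Stmt7Aux

variable {d : ℕ} (H : Matrix (Fin d) (Fin d) ℂ)

noncomputable def Ene (x : Fin d → ℂ) : ℂ := ∑ i, ∑ j, (starRingEnd ℂ) (x i) * H i j * x j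

noncomputable def Nrm (x : Fin d → ℂ) : ℝ := ∑ j, Complex.normSq (x j)

noncomputable def M (x : Fin d → ℂ) : Matrix (Fin d) (Fin d) ℂ := vecMulVec x (star x)

lemma M_apply (x : Fin d → ℂ) (i j : Fin d) :
    M x i j = x i * (starRingEnd ℂ) (x j) := rfl

lemma Ene_eq (x : Fin d → ℂ) : Ene H x = ∑ i, ∑ j, H i j * M x j i := by
  unfold Ene M
  congr 1; ext i; congr 1; ext j
  simp [vecMulVec_apply, Pi.star_apply, Complex.star_def]
  ring

lemma Nrm_eq (x : Fin d → ℂ) : (Nrm x : ℂ) = ∑ j, M x j j := by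
  unfold Nrm M
  push_cast
  congr 1; ext j
  simp [vecMulVec_apply, Pi.star_apply, Complex.star_def, Complex.normSq_eq_conj_mul_self]
  ring

lemma Ene_real (hH : H.IsHermitian) (x : Fin d → ℂ) :
    Ene H x = ((Ene H x).re : ℂ) := by
  refine (Complex.conj_eq_iff_re.mp ?_).symm
  unfold Ene
  rw [map_sum]
  rw [Finset.sum_comm]
  congr 1; ext i
  rw [map_sum]
  congr 1; ext j
  simp only [_root_.map_mul, Complex.conj_conj]
  have : (starRingEnd ℂ) (H i j) = H j i := by
    conv_rhs => rw [← hH]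
    simp [conjTranspose_apply]
  rw [this]; ring


lemma Ene_neg (x : Fin d → ℂ) : Ene H (-x) = Ene H x := by
  unfold Ene
  congr 1; ext i; congr 1; ext j
  simp only [Pi.neg_apply, map_neg, neg_mul, mul_neg, neg_neg]

lemma Nrm_neg (x : Fin d → ℂ) : Nrm (-x) = Nrm x := by
  unfold Nrm; simp

lemma M_add_M (t : ℝ) (x y : Fin d → ℂ) :
    M ((Real.cos t : ℂ) • x - (Real.sin t : ℂ) • y)
      + M ((Real.sin t : ℂ) • x + (Real.cos t : ℂ) • y) = M x + M y := by
  have hcs : (Real.cos t : ℂ)^2 + (Real.sin t : ℂ)^2 = 1 := by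
    push_cast [← Complex.ofReal_pow]
    exact_mod_cast Real.cos_sq_add_sin_sq t
  ext i j
  simp only [M, vecMulVec_apply, Matrix.add_apply, Pi.star_apply, Pi.sub_apply, Pi.add_apply,
    Pi.smul_apply, smul_eq_mul, Complex.star_def, map_sub, map_add, _root_.map_mul,
    Complex.conj_ofReal]
  linear_combination (x i * (starRingEnd ℂ) (x j) + y i * (starRingEnd ℂ) (y j)) * hcs

lemma exists_mix (N : ℝ) (x y : Fin d → ℂ)
    (hx : (Ene H x).re - N * Nrm x < 0) (hy : 0 < (Ene H y).re - N * Nrm y) :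
    ∃ x' y', M x' + M y' = M x + M y ∧ (Ene H x').re = N * Nrm x' := by
  set v : ℝ → (Fin d → ℂ) := fun t => (Real.cos t : ℂ) • x - (Real.sin t : ℂ) • y with hv
  set f : ℝ → ℝ := fun t => (Ene H (v t)).re - N * Nrm (v t) with hf
  have hcont : Continuous f := by
    have hvc : ∀ i : Fin d, Continuous fun t => v t i := by
      intro i
      simp only [hv, Pi.sub_apply, Pi.smul_apply, smul_eq_mul]
      fun_prop
    apply Continuous.sub
    · apply Complex.continuous_re.comp
      unfold Ene
      apply continuous_finset_sum; intro i _
      apply continuous_finset_sum; intro j _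
      exact (((Complex.continuous_conj.comp (hvc i)).mul continuous_const).mul (hvc j))
    · apply Continuous.mul continuous_const
      unfold Nrm
      apply continuous_finset_sum; intro j _
      exact Complex.continuous_normSq.comp (hvc j)
  have h0 : f 0 < 0 := by
    have : v 0 = x := by simp [hv]
    simpa [hf, this] using hx
  have h1 : 0 < f (Real.pi / 2) := by
    have : v (Real.pi / 2) = -y := by simp [hv]
    simpa [hf, this, Ene_neg, Nrm_neg] using hy
  have hmem : (0 : ℝ) ∈ Set.Icc (f 0) (f (Real.pi / 2)) := ⟨h0.le, h1.le⟩
  have hsub := intermediate_value_Icc (by positivity : (0:ℝ) ≤ Real.pi / 2)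
    hcont.continuousOn hmem
  obtain ⟨t, _, ht⟩ := hsub
  refine ⟨v t, (Real.sin t : ℂ) • x + (Real.cos t : ℂ) • y, M_add_M t x y, ?_⟩
  have : (Ene H (v t)).re - N * Nrm (v t) = 0 := ht
  linarith


lemma sum_Ene (n : ℕ) (u : Fin n → Fin d → ℂ) :
    ∑ k, Ene H (u k) = ∑ i, ∑ j, H i j * (∑ k, M (u k)) j i := by
  calc ∑ k, Ene H (u k) = ∑ k, ∑ i, ∑ j, H i j * M (u k) j i := by simp_rw [Ene_eq]
    _ = ∑ i, ∑ k, ∑ j, H i j * M (u k) j i := Finset.sum_comm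
    _ = ∑ i, ∑ j, ∑ k, H i j * M (u k) j i := by
        congr 1; ext i; exact Finset.sum_comm
    _ = ∑ i, ∑ j, H i j * (∑ k, M (u k)) j i := by
        congr 1; ext i; congr 1; ext j
        rw [Matrix.sum_apply, Finset.mul_sum]

lemma sum_Nrm (n : ℕ) (u : Fin n → Fin d → ℂ) :
    ((∑ k, Nrm (u k) : ℝ) : ℂ) = ∑ j, (∑ k, M (u k)) j j := by
  push_cast [Nrm_eq]
  rw [Finset.sum_comm]
  congr 1; ext j
  rw [Matrix.sum_apply]

lemma decompose (hH : H.IsHermitian) (N : ℝ) :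
    ∀ (k n : ℕ) (x : Fin n → Fin d → ℂ),
    (Finset.univ.filter fun i => (Ene H (x i)).re ≠ N * Nrm (x i)).card ≤ k →
    (∑ i, Ene H (x i)) = (N : ℂ) * ((∑ i, Nrm (x i) : ℝ) : ℂ) →
    ∃ y : Fin n → Fin d → ℂ, (∑ i, M (y i)) = ∑ i, M (x i) ∧
      ∀ i, (Ene H (y i)).re = N * Nrm (y i) := by
  intro k
  induction k with
  | zero =>
    intro n x hcard _
    refine ⟨x, rfl, fun i => ?_⟩
    by_contra hbad
    have : i ∈ Finset.univ.filter fun i => (Ene H (x i)).re ≠ N * Nrm (x i) := by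
      simp [hbad]
    have := Finset.card_pos.mpr ⟨i, this⟩
    omega
  | succ k ih =>
    intro n x hcard hsum
    set bad := Finset.univ.filter fun i => (Ene H (x i)).re ≠ N * Nrm (x i) with hbadset
    by_cases hemp : bad = ∅
    · refine ⟨x, rfl, fun i => ?_⟩
      by_contra hbad
      have : i ∈ bad := by simp [hbadset, hbad]
      simp [hemp] at this
    -- real sum condition
    set g : Fin n → ℝ := fun i => (Ene H (x i)).re - N * Nrm (x i) with hg
    have hgsum : ∑ i, g i = 0 := by
      have h1 : ∑ i, Ene H (x i) = ((∑ i, (Ene H (x i)).re : ℝ) : ℂ) := by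
        push_cast
        congr 1; ext i; exact Ene_real H hH (x i)
      rw [h1] at hsum
      have h2 : (∑ i, (Ene H (x i)).re : ℝ) = N * ∑ i, Nrm (x i) := by
        exact_mod_cast hsum
      simp only [hg, Finset.sum_sub_distrib, ← Finset.mul_sum]
      linarith
    obtain ⟨i0, hi0⟩ := Finset.nonempty_of_ne_empty hemp
    have hi0' : g i0 ≠ 0 := by
      simp only [hbadset, Finset.mem_filter] at hi0
      simpa [hg, sub_eq_zero] using hi0.2
    have hex_neg : ∃ a, g a < 0 := by
      by_contra hno
      push_neg at hno
      have := (Finset.sum_eq_zero_iff_of_nonneg (fun i _ => hno i)).mp hgsum i0 (Finset.mem_univ _)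
      exact hi0' this
    have hex_pos : ∃ b, 0 < g b := by
      by_contra hno
      push_neg at hno
      have hgsum' : ∑ i, (-g) i = 0 := by simp [Finset.sum_neg_distrib]; simpa using hgsum
      have := (Finset.sum_eq_zero_iff_of_nonneg
        (fun i _ => by simpa using hno i)).mp hgsum' i0 (Finset.mem_univ _)
      exact hi0' (by simpa using this)
    obtain ⟨a, ha⟩ := hex_neg
    obtain ⟨b, hb⟩ := hex_pos
    have hab : a ≠ b := fun h => by rw [h] at ha; linarith
    obtain ⟨x', y', hmix, hx'⟩ := exists_mix H N (x a) (x b) (by simpa [hg] using ha)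
      (by simpa [hg] using hb)
    set y : Fin n → Fin d → ℂ := Function.update (Function.update x a x') b y' with hy
    have hya : y a = x' := by
      rw [hy, Function.update_of_ne hab, Function.update_self]
    have hyb : y b = y' := by rw [hy, Function.update_self]
    have hyo : ∀ i, i ≠ a → i ≠ b → y i = x i := fun i hia hib => by
      rw [hy, Function.update_of_ne hib, Function.update_of_ne hia]
    -- matrix sum preserved
    have hsplit : ∀ (u : Fin n → Fin d → ℂ), ∑ i, M (u i)
        = (∑ i ∈ Finset.univ \ {a, b}, M (u i)) + (M (u a) + M (u b)) := by
      intro u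
      rw [← Finset.sum_sdiff (Finset.subset_univ ({a, b} : Finset (Fin n))),
        Finset.sum_pair hab]
    have hM : (∑ i, M (y i)) = ∑ i, M (x i) := by
      rw [hsplit y, hsplit x]
      congr 1
      · refine Finset.sum_congr rfl fun i hi => ?_
        rw [Finset.mem_sdiff, Finset.mem_insert, Finset.mem_singleton] at hi
        push_neg at hi
        rw [hyo i hi.2.1 hi.2.2]
      · rw [hya, hyb, hmix]
    have hsum' : (∑ i, Ene H (y i)) = (N : ℂ) * ((∑ i, Nrm (y i) : ℝ) : ℂ) := by
      rw [sum_Ene _ _ y, sum_Nrm _ y, hM, ← sum_Ene _ _ x, ← sum_Nrm _ x, hsum]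
    have hacard : a ∈ bad := by
      simp only [hbadset, Finset.mem_filter, Finset.mem_univ, true_and]
      intro h
      rw [hg] at ha; simp only [h] at ha; linarith
    have hbcard : b ∈ bad := by
      simp only [hbadset, Finset.mem_filter, Finset.mem_univ, true_and]
      intro h
      rw [hg] at hb; simp only [h] at hb; linarith
    have hsubbad : (Finset.univ.filter fun i => (Ene H (y i)).re ≠ N * Nrm (y i))
        ⊆ bad.erase a := by
      intro i hi
      simp only [Finset.mem_filter, Finset.mem_univ, true_and] at hi
      rcases eq_or_ne i a with rfl | hia
      · exact absurd (by rw [hya]; exact hx') hi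
      rcases eq_or_ne i b with rfl | hib
      · exact Finset.mem_erase.mpr ⟨hab.symm, hbcard⟩
      · rw [hyo i hia hib] at hi
        exact Finset.mem_erase.mpr ⟨hia, by
          simp only [hbadset, Finset.mem_filter, Finset.mem_univ, true_and]; exact hi⟩
    have hcard' : (Finset.univ.filter fun i => (Ene H (y i)).re ≠ N * Nrm (y i)).card ≤ k := by
      have h1 := Finset.card_le_card hsubbad
      have h2 := Finset.card_erase_of_mem hacard
      have h3 : 1 ≤ bad.card := Finset.card_pos.mpr ⟨a, hacard⟩
      omega
    obtain ⟨z, hz1, hz2⟩ := ih n y hcard' hsum'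
    exact ⟨z, hz1.trans hM, hz2⟩

lemma Ene_smul (r : ℝ) (v : Fin d → ℂ) :
    Ene H ((r : ℂ) • v) = ((r ^ 2 : ℝ) : ℂ) * Ene H v := by
  unfold Ene
  rw [Finset.mul_sum]
  congr 1; ext i
  rw [Finset.mul_sum]
  congr 1; ext j
  simp only [Pi.smul_apply, smul_eq_mul, _root_.map_mul, Complex.conj_ofReal]
  push_cast
  ring

lemma Nrm_smul (r : ℝ) (v : Fin d → ℂ) :
    Nrm ((r : ℂ) • v) = r ^ 2 * Nrm v := by
  unfold Nrm
  rw [Finset.mul_sum]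
  congr 1; ext j
  simp only [Pi.smul_apply, smul_eq_mul, Complex.normSq_mul, Complex.normSq_ofReal]
  ring

lemma sum_fin_of {n : ℕ} (s : Finset (Fin n)) {A : Type*} [AddCommMonoid A] (f : Fin n → A) :
    ∑ k : Fin s.card, f ((s.equivFin.symm k) : Fin n) = ∑ i ∈ s, f i := by
  have h1 := Fintype.sum_equiv s.equivFin.symm
    (fun k => f ((s.equivFin.symm k) : Fin n)) (fun a : ↥s => f ↑a) (fun k => rfl)
  refine h1.trans ?_
  simp only [Finset.univ_eq_attach]
  exact Finset.sum_attach s f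

lemma M_zero : M (0 : Fin d → ℂ) = 0 := by
  ext i j; simp [M, vecMulVec_apply]

lemma Nrm_zero : Nrm (0 : Fin d → ℂ) = 0 := by simp [Nrm]

lemma Nrm_pos (v : Fin d → ℂ) (hv : v ≠ 0) : 0 < Nrm v := by
  obtain ⟨j, hj⟩ : ∃ j, v j ≠ 0 := by
    by_contra h
    push_neg at h
    exact hv (funext h)
  exact Finset.sum_pos' (fun _ _ => Complex.normSq_nonneg _)
    ⟨j, Finset.mem_univ j, Complex.normSq_pos.mpr hj⟩

end Stmt7Aux

open Stmt7Aux in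
theorem stmt_7 (d : ℕ) (H ρ : Matrix (Fin d) (Fin d) ℂ) (N : ℝ)
    (hH : H.IsHermitian) (hρ : ρ.PosSemidef) (htr : ρ.trace = 1)
    (hN : (ρ * H).trace = (N : ℂ)) :
    ∃ (n : ℕ) (p : Fin n → ℝ) (ψ : Fin n → Fin d → ℂ),
      (∀ k, 0 < p k) ∧ (∑ k, p k = 1) ∧
      (∀ k, ∑ j, Complex.normSq (ψ k j) = 1) ∧
      ρ = ∑ k, (p k : ℂ) • Matrix.vecMulVec (ψ k) (star (ψ k)) ∧
      (∀ k, ∑ i, ∑ j, (starRingEnd ℂ) (ψ k i) * H i j * ψ k j = (N : ℂ)) := by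
  classical
  obtain ⟨B, hB⟩ : ∃ B : Matrix (Fin d) (Fin d) ℂ, ρ = Bᴴ * B := by
    open scoped MatrixOrder in exact CStarAlgebra.nonneg_iff_eq_star_mul_self.mp hρ.nonneg
  set x : Fin d → Fin d → ℂ := fun k j => (starRingEnd ℂ) (B k j) with hx
  have hMx : ∑ k, M (x k) = ρ := by
    ext i j
    rw [Matrix.sum_apply, hB]
    simp only [M_apply, hx, Matrix.mul_apply, conjTranspose_apply, Complex.conj_conj,
      Complex.star_def]
  have hNrm1 : ∑ k, Nrm (x k) = 1 := by
    have h := sum_Nrm d x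
    rw [hMx] at h
    have h2 : ((∑ k, Nrm (x k) : ℝ) : ℂ) = (1 : ℂ) := by
      rw [h]
      have htr' : ρ.trace = ∑ j, ρ j j := rfl
      rw [← htr', htr]
    exact_mod_cast h2
  have hEsum : ∑ k, Ene H (x k) = (N : ℂ) * ((∑ k, Nrm (x k) : ℝ) : ℂ) := by
    rw [hNrm1, sum_Ene, hMx]
    have h3 : (ρ * H).trace = ∑ i, ∑ j, H i j * ρ j i := by
      have htr' : (ρ * H).trace = ∑ j, (ρ * H) j j := rfl
      rw [htr', Finset.sum_comm]
      congr 1; ext j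
      rw [Matrix.mul_apply]
      congr 1; ext i
      ring
    rw [← h3, hN]
    push_cast
    ring
  have hcard : (Finset.univ.filter fun i => (Ene H (x i)).re ≠ N * Nrm (x i)).card ≤ d := by
    refine le_trans (Finset.card_filter_le _ _) (by simp)
  obtain ⟨y, hy1, hy2⟩ := decompose H hH N d d x hcard hEsum
  rw [hMx] at hy1
  set s : Finset (Fin d) := Finset.univ.filter fun i => y i ≠ 0 with hs
  have hzero : ∀ i : Fin d, i ∉ s → y i = 0 := by
    intro i hi
    simp only [hs, Finset.mem_filter, Finset.mem_univ, true_and, not_not] at hi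
    exact hi
  have hSpos : ∀ k : Fin s.card, 0 < Nrm (y ((s.equivFin.symm k) : Fin d)) := by
    intro k
    refine Nrm_pos _ ?_
    have hm := (s.equivFin.symm k).prop
    simp only [hs, Finset.mem_filter, Finset.mem_univ, true_and] at hm
    exact hm
  have hNrmy : ∑ k, Nrm (y k) = 1 := by
    have h := sum_Nrm d y
    rw [hy1] at h
    have h2 : ((∑ k, Nrm (y k) : ℝ) : ℂ) = (1 : ℂ) := by
      rw [h]
      have htr' : ρ.trace = ∑ j, ρ j j := rfl
      rw [← htr', htr]
    exact_mod_cast h2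
  refine ⟨s.card, fun k => Nrm (y ((s.equivFin.symm k) : Fin d)),
    fun k => (((Real.sqrt (Nrm (y ((s.equivFin.symm k) : Fin d))))⁻¹ : ℝ) : ℂ)
      • y ((s.equivFin.symm k) : Fin d),
    hSpos, ?_, ?_, ?_, ?_⟩
  · rw [sum_fin_of s (fun i => Nrm (y i))]
    rw [Finset.sum_subset (Finset.subset_univ s)]
    · exact hNrmy
    · intro i _ hi
      rw [hzero i hi, Nrm_zero]
  · intro k
    set S := Nrm (y ((s.equivFin.symm k) : Fin d)) with hS
    have hSp : 0 < S := hSpos k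
    show Nrm (((((Real.sqrt S)⁻¹ : ℝ)) : ℂ) • y ((s.equivFin.symm k) : Fin d)) = 1
    rw [Nrm_smul, ← hS]
    rw [inv_pow, Real.sq_sqrt hSp.le, inv_mul_cancel₀ hSp.ne']
  · have hterm : ∀ k : Fin s.card,
        ((Nrm (y ((s.equivFin.symm k) : Fin d)) : ℝ) : ℂ)
          • Matrix.vecMulVec
            ((((Real.sqrt (Nrm (y ((s.equivFin.symm k) : Fin d))))⁻¹ : ℝ) : ℂ)
              • y ((s.equivFin.symm k) : Fin d))
            (star ((((Real.sqrt (Nrm (y ((s.equivFin.symm k) : Fin d))))⁻¹ : ℝ) : ℂ)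
              • y ((s.equivFin.symm k) : Fin d)))
          = M (y ((s.equivFin.symm k) : Fin d)) := by
      intro k
      set S := Nrm (y ((s.equivFin.symm k) : Fin d)) with hS
      have hSp : 0 < S := hSpos k
      set v := y ((s.equivFin.symm k) : Fin d) with hv
      ext i j
      simp only [Matrix.smul_apply, vecMulVec_apply, Pi.smul_apply, Pi.star_apply,
        smul_eq_mul, Complex.star_def, _root_.map_mul, Complex.conj_ofReal, M_apply]
      have hre : S * ((Real.sqrt S)⁻¹ * (Real.sqrt S)⁻¹) = 1 := by
        rw [← mul_inv, Real.mul_self_sqrt hSp.le, mul_inv_cancel₀ hSp.ne']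
      have hfact : (S : ℂ) * (((Real.sqrt S)⁻¹ : ℝ) : ℂ) * (((Real.sqrt S)⁻¹ : ℝ) : ℂ) = 1 := by
        rw [mul_assoc]
        exact_mod_cast hre
      linear_combination v i * (starRingEnd ℂ) (v j) * hfact
    rw [Finset.sum_congr rfl (fun k _ => hterm k)]
    rw [sum_fin_of s (fun i => M (y i))]
    rw [Finset.sum_subset (Finset.subset_univ s)]
    · exact hy1.symm
    · intro i _ hi
      rw [hzero i hi, M_zero]
  · intro k
    set S := Nrm (y ((s.equivFin.symm k) : Fin d)) with hS
    have hSp : 0 < S := hSpos k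
    set v := y ((s.equivFin.symm k) : Fin d) with hv
    show Ene H ((((Real.sqrt S)⁻¹ : ℝ) : ℂ) • v) = (N : ℂ)
    rw [Ene_smul]
    have hEv : Ene H v = ((N * S : ℝ) : ℂ) := by
      rw [Ene_real H hH v, hy2]
    rw [hEv, inv_pow, Real.sq_sqrt hSp.le]
    have hSne : (S : ℂ) ≠ 0 := by exact_mod_cast hSp.ne'
    push_cast
    field_simp
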